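/- arXiv:1607.01369 — 3 statements merged into one kernel-verified Lean document; each statement's English description precedes it below -/
import Mathlib

section
/- Let x = (x_1,...,x_k) be a vector of distinct real numbers, f a strictly increasing real function, and σ the cyclic permutation sending i to i+1 (mod k). Let α be the minimum gap between consecutive order statistics of x and β the minimum gap between consecutive order statistics of f applied to x. Then ⟨x, f(x)⟩ − ⟨x, f(σ(x))⟩ ≥ (k−1)αβ, where f(σ(x)) denotes the vector with i-th entry f(x_{σ(i)}). -/
open Fin.NatCast in
lemma aux_cycle_full {k : ℕ} [NeZero k] (A : Finset (Fin k))
    (h : ∀ i ∈ A, i + 1 ∈ A) (ha : A.Nonempty) : A = Finset.univ := by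
  obtain ⟨a, haA⟩ := ha
  have key : ∀ n : ℕ, a + (n : Fin k) ∈ A := by
    intro n
    induction n with
    | zero => simpa using haA
    | succ n ih =>
        have h2 := h _ ih
        have h3 : a + ((n + 1 : ℕ) : Fin k) = a + (n : Fin k) + 1 := by
          push_cast
          rw [add_assoc]
        rw [h3]
        exact h2
  apply Finset.eq_univ_of_forall
  intro j
  have h4 := key ((j - a : Fin k) : ℕ)
  rwa [Fin.cast_val_eq_self, add_sub_cancel] at h4

lemma aux_decomp {k : ℕ} (hk1 : 1 ≤ k) (u : Fin k → ℝ) (q : Fin k) :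
    u q - u ⟨0, hk1⟩ = ∑ ℓ ∈ Finset.range (k - 1),
      (u ⟨min (ℓ + 1) (k - 1), by omega⟩ - u ⟨min ℓ (k - 1), by omega⟩) *
        (if ℓ < (q : ℕ) then 1 else 0) := by
  classical
  set g : ℕ → ℝ := fun n => u ⟨min n (k - 1), by omega⟩ with hg
  have hq : (q : ℕ) ≤ k - 1 := by have := q.isLt; omega
  have h1 : ∀ ℓ ∈ Finset.range (k - 1),
      (g (ℓ + 1) - g ℓ) * (if ℓ < (q : ℕ) then (1:ℝ) else 0)
        = if ℓ < (q : ℕ) then g (ℓ + 1) - g ℓ else 0 := by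
    intro ℓ _
    split_ifs <;> ring
  rw [Finset.sum_congr rfl h1, Finset.sum_ite, Finset.sum_const_zero, add_zero]
  have h2 : (Finset.range (k - 1)).filter (fun ℓ => ℓ < (q : ℕ)) = Finset.range (q : ℕ) := by
    ext ℓ
    simp only [Finset.mem_filter, Finset.mem_range]
    omega
  rw [h2, Finset.sum_range_sub g (q : ℕ)]
  have hgq : g (q : ℕ) = u q := by
    have : (⟨min (q:ℕ) (k-1), by omega⟩ : Fin k) = q := Fin.ext (min_eq_left hq)
    simp only [hg]
    rw [this]
  have hg0 : g 0 = u ⟨0, hk1⟩ := by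
    have : (⟨min 0 (k-1), by omega⟩ : Fin k) = (⟨0, hk1⟩ : Fin k) := Fin.ext (by simp)
    simp only [hg]
    rw [this]
  rw [hgq, hg0]

/-- Proposition 1 (cycle lemma): for a vector `x` of distinct reals, a strictly
increasing `f`, and the cyclic permutation `σ : i ↦ i + 1 (mod k)`,
`⟨x, f(x)⟩ − ⟨x, f(σ(x))⟩ ≥ (k−1)αβ`, where `α` is the minimum gap between
(consecutive order statistics of) the entries of `x` and `β` the analogous
quantity for `f` applied to the entries of `x`. -/
theorem cycle_inner_product_gap (k : ℕ) [NeZero k] (hk : 2 ≤ k)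
    (x : Fin k → ℝ) (hx : Function.Injective x)
    (f : ℝ → ℝ) (hf : StrictMono f)
    (σ : Equiv.Perm (Fin k)) (hσ : ∀ i, σ i = i + 1)
    (α β : ℝ)
    (hα : IsLeast {d : ℝ | ∃ i j : Fin k, i ≠ j ∧ d = |x i - x j|} α)
    (hβ : IsLeast {d : ℝ | ∃ i j : Fin k, i ≠ j ∧ d = |f (x i) - f (x j)|} β) :
    (∑ i, x i * f (x i)) - ∑ i, x i * f (x (σ i)) ≥ ((k : ℝ) - 1) * α * β := by
  classical
  obtain ⟨⟨i0, j0, hij0, hα0⟩, hαlb⟩ := hα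
  obtain ⟨⟨i1, j1, hij1, hβ0⟩, hβlb⟩ := hβ
  have hαpos : 0 < α := by
    rw [hα0]; exact abs_pos.mpr (sub_ne_zero.mpr fun h => hij0 (hx h))
  have hβpos : 0 < β := by
    rw [hβ0]
    exact abs_pos.mpr (sub_ne_zero.mpr fun h => hij1 (hx (hf.injective h)))
  have hk1 : 1 ≤ k := le_trans (by norm_num) hk
  set τ : Equiv.Perm (Fin k) := Tuple.sort x with hτ
  have hw : StrictMono (x ∘ τ) :=
    (Tuple.monotone_sort x).strictMono_of_injective (hx.comp τ.injective)
  set w : Fin k → ℝ := x ∘ τ with hwdef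
  set v : Fin k → ℝ := fun q => f (w q) with hvdef
  have hv : StrictMono v := hf.comp hw
  set p : Fin k → Fin k := fun i => τ.symm i with hpdef
  have hxp : ∀ i, x i = w (p i) := fun i => by
    simp only [hwdef, hpdef, Function.comp_apply, Equiv.apply_symm_apply]
  have hfxp : ∀ i, f (x i) = v (p i) := fun i => by rw [hxp i]
  have hpτ : ∀ q : Fin k, p (τ q) = q := fun q => Equiv.symm_apply_apply τ q
  set D : ℕ → ℝ := fun ℓ =>
    w ⟨min (ℓ + 1) (k - 1), by omega⟩ - w ⟨min ℓ (k - 1), by omega⟩ with hDdef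
  set E : ℕ → ℝ := fun ℓ =>
    v ⟨min (ℓ + 1) (k - 1), by omega⟩ - v ⟨min ℓ (k - 1), by omega⟩ with hEdef
  set R := Finset.range (k - 1) with hRdef
  set c : ℕ → Fin k → ℝ := fun ℓ i => if ℓ < ((p i : Fin k) : ℕ) then 1 else 0 with hcdef
  -- decompositions
  have hdx : ∀ i, x i - w ⟨0, hk1⟩ = ∑ ℓ ∈ R, D ℓ * c ℓ i := by
    intro i
    rw [hxp i]
    exact aux_decomp hk1 w (p i)
  have hdv : ∀ i, f (x i) - v ⟨0, hk1⟩ = ∑ ℓ ∈ R, E ℓ * c ℓ i := by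
    intro i
    rw [hfxp i]
    exact aux_decomp hk1 v (p i)
  -- main algebraic identity
  have hsum0 : ∑ i, f (x (σ i)) = ∑ i, f (x i) := Equiv.sum_comp σ (fun i => f (x i))
  set w0 : ℝ := w ⟨0, hk1⟩ with hw0
  have key : (∑ i, x i * f (x i)) - ∑ i, x i * f (x (σ i))
      = ∑ i, (x i - w0) * (f (x i) - f (x (σ i))) := by
    have h5 : ∀ i : Fin k, (x i - w0) * (f (x i) - f (x (σ i)))
        = (x i * f (x i) - x i * f (x (σ i))) - (w0 * f (x i) - w0 * f (x (σ i))) := by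
      intro i; ring
    rw [Finset.sum_congr rfl (fun i _ => h5 i), Finset.sum_sub_distrib,
      Finset.sum_sub_distrib, Finset.sum_sub_distrib, ← Finset.mul_sum, ← Finset.mul_sum, hsum0]
    ring
  -- second factor decomposition
  have hdv2 : ∀ i : Fin k, f (x i) - f (x (σ i)) = ∑ m ∈ R, E m * (c m i - c m (σ i)) := by
    intro i
    have := hdv i
    have h2 := hdv (σ i)
    have h3 : f (x i) - f (x (σ i))
        = (f (x i) - v ⟨0, hk1⟩) - (f (x (σ i)) - v ⟨0, hk1⟩) := by ring
    rw [h3, this, h2, ← Finset.sum_sub_distrib]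
    exact Finset.sum_congr rfl fun m _ => by ring
  set T : ℕ → ℕ → ℝ := fun ℓ m => ∑ i, c ℓ i * (c m i - c m (σ i)) with hTdef
  have key2 : (∑ i, x i * f (x i)) - ∑ i, x i * f (x (σ i))
      = ∑ ℓ ∈ R, ∑ m ∈ R, D ℓ * E m * T ℓ m := by
    rw [key]
    have h6 : ∀ i : Fin k, (x i - w0) * (f (x i) - f (x (σ i)))
        = ∑ ℓ ∈ R, ∑ m ∈ R, D ℓ * E m * (c ℓ i * (c m i - c m (σ i))) := by
      intro i
      rw [hdx i, hdv2 i, Finset.sum_mul_sum]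
      exact Finset.sum_congr rfl fun ℓ _ => Finset.sum_congr rfl fun m _ => by ring
    rw [Finset.sum_congr rfl (fun i _ => h6 i), Finset.sum_comm]
    refine Finset.sum_congr rfl fun ℓ _ => ?_
    rw [Finset.sum_comm]
    refine Finset.sum_congr rfl fun m _ => ?_
    rw [← Finset.mul_sum]
  -- counting
  have hcount : ∀ ℓ m : ℕ, T ℓ m =
      ((Finset.univ.filter (fun i : Fin k => ℓ < ((p i : Fin k) : ℕ) ∧ m < ((p i : Fin k) : ℕ))).card : ℝ)
      - ((Finset.univ.filter (fun i : Fin k => ℓ < ((p i : Fin k) : ℕ) ∧ m < ((p (σ i) : Fin k) : ℕ))).card : ℝ) := by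
    intro ℓ m
    have h7 : ∀ i : Fin k, c ℓ i * (c m i - c m (σ i))
        = (if ℓ < ((p i : Fin k) : ℕ) ∧ m < ((p i : Fin k) : ℕ) then (1:ℝ) else 0)
          - (if ℓ < ((p i : Fin k) : ℕ) ∧ m < ((p (σ i) : Fin k) : ℕ) then (1:ℝ) else 0) := by
      intro i
      by_cases ha : ℓ < ((p i : Fin k) : ℕ) <;>
        by_cases hb : m < ((p i : Fin k) : ℕ) <;>
        by_cases hc : m < ((p (σ i) : Fin k) : ℕ) <;>
        simp [hcdef, ha, hb, hc]
    simp only [hTdef]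
    rw [Finset.sum_congr rfl (fun i _ => h7 i), Finset.sum_sub_distrib,
      Finset.sum_boole, Finset.sum_boole]
  have hQP : ∀ ℓ m : ℕ,
      (Finset.univ.filter (fun i : Fin k => ℓ < ((p i : Fin k) : ℕ) ∧ m < ((p (σ i) : Fin k) : ℕ))).card
      ≤ (Finset.univ.filter (fun i : Fin k => ℓ < ((p i : Fin k) : ℕ) ∧ m < ((p i : Fin k) : ℕ))).card := by
    intro ℓ m
    rcases le_total ℓ m with h | h
    · have hP : (Finset.univ.filter (fun i : Fin k => ℓ < ((p i : Fin k) : ℕ) ∧ m < ((p i : Fin k) : ℕ)))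
          = Finset.univ.filter (fun i : Fin k => m < ((p i : Fin k) : ℕ)) := by
        apply Finset.filter_congr
        intro i _
        constructor
        · exact fun hh => hh.2
        · exact fun hh => ⟨by omega, hh⟩
      rw [hP]
      apply Finset.card_le_card_of_injOn σ
      · intro i hi
        simp only [Finset.coe_filter, Finset.mem_univ, true_and, Set.mem_setOf_eq] at hi ⊢
        exact hi.2
      · exact σ.injective.injOn
    · have hP : (Finset.univ.filter (fun i : Fin k => ℓ < ((p i : Fin k) : ℕ) ∧ m < ((p i : Fin k) : ℕ)))
          = Finset.univ.filter (fun i : Fin k => ℓ < ((p i : Fin k) : ℕ)) := by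
        apply Finset.filter_congr
        intro i _
        constructor
        · exact fun hh => hh.1
        · exact fun hh => ⟨hh, by omega⟩
      rw [hP]
      apply Finset.card_le_card
      intro i hi
      simp only [Finset.mem_filter, Finset.mem_univ, true_and] at hi ⊢
      exact hi.1
  have hT0 : ∀ ℓ m : ℕ, 0 ≤ T ℓ m := by
    intro ℓ m
    rw [hcount ℓ m]
    have := hQP ℓ m
    simp only [sub_nonneg]
    exact_mod_cast this
  have hT1 : ∀ ℓ ∈ R, (1:ℝ) ≤ T ℓ ℓ := by
    intro ℓ hℓ
    rw [hRdef, Finset.mem_range] at hℓ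
    rw [hcount ℓ ℓ]
    set A := Finset.univ.filter (fun i : Fin k => ℓ < ((p i : Fin k) : ℕ)) with hA
    have hP : (Finset.univ.filter (fun i : Fin k => ℓ < ((p i : Fin k) : ℕ) ∧ ℓ < ((p i : Fin k) : ℕ))) = A := by
      rw [hA]
      apply Finset.filter_congr
      intro i _
      exact ⟨fun hh => hh.1, fun hh => ⟨hh, hh⟩⟩
    set Q := Finset.univ.filter (fun i : Fin k => ℓ < ((p i : Fin k) : ℕ) ∧ ℓ < ((p (σ i) : Fin k) : ℕ)) with hQ
    have hQsubA : Q ⊆ A := by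
      intro i hi
      simp only [hQ, hA, Finset.mem_filter, Finset.mem_univ, true_and] at hi ⊢
      exact hi.1
    have hlt : Q.card < A.card := by
      by_contra hcon
      push_neg at hcon
      have hQA : Q = A := Finset.eq_of_subset_of_card_le hQsubA hcon
      have hclosed : ∀ i ∈ A, i + 1 ∈ A := by
        intro i hi
        have : i ∈ Q := hQA ▸ hi
        simp only [hQ, Finset.mem_filter, Finset.mem_univ, true_and] at this
        have h8 := this.2
        rw [hσ i] at h8
        simp only [hA, Finset.mem_filter, Finset.mem_univ, true_and]
        exact h8
      have hne : A.Nonempty := by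
        refine ⟨τ ⟨k - 1, by omega⟩, ?_⟩
        simp only [hA, Finset.mem_filter, Finset.mem_univ, true_and, hpτ]
        exact hℓ
      have hAuniv := aux_cycle_full A hclosed hne
      have hmem : τ ⟨0, by omega⟩ ∈ A := hAuniv ▸ Finset.mem_univ _
      simp only [hA, Finset.mem_filter, Finset.mem_univ, true_and, hpτ] at hmem
      omega
    rw [hP]
    have : (Q.card : ℝ) + 1 ≤ (A.card : ℝ) := by exact_mod_cast hlt
    linarith
  -- bounds on D and E
  have hwx : ∀ q : Fin k, x (τ q) = w q := fun q => rfl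
  have hvx : ∀ q : Fin k, f (x (τ q)) = v q := fun q => by rw [hwx q]
  have hD : ∀ ℓ ∈ R, α ≤ D ℓ := by
    intro ℓ hℓ
    rw [hRdef, Finset.mem_range] at hℓ
    have hmin1 : min (ℓ + 1) (k - 1) = ℓ + 1 := by omega
    have hmin2 : min ℓ (k - 1) = ℓ := by omega
    have hab : (⟨min ℓ (k-1), by omega⟩ : Fin k) < ⟨min (ℓ+1) (k-1), by omega⟩ := by
      simp only [Fin.mk_lt_mk]; omega
    have hpos : w ⟨min ℓ (k-1), by omega⟩ < w ⟨min (ℓ+1) (k-1), by omega⟩ := hw hab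
    have hne : τ ⟨min (ℓ+1) (k-1), by omega⟩ ≠ τ ⟨min ℓ (k-1), by omega⟩ := by
      intro hcon
      have := τ.injective hcon
      simp only [Fin.mk.injEq] at this
      omega
    have hmem : w ⟨min (ℓ+1) (k-1), by omega⟩ - w ⟨min ℓ (k-1), by omega⟩
        ∈ {d : ℝ | ∃ i j : Fin k, i ≠ j ∧ d = |x i - x j|} := by
      refine ⟨τ ⟨min (ℓ+1) (k-1), by omega⟩, τ ⟨min ℓ (k-1), by omega⟩, hne, ?_⟩
      exact (abs_of_pos (sub_pos.mpr hpos)).symm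
    exact hαlb hmem
  have hE : ∀ ℓ ∈ R, β ≤ E ℓ := by
    intro ℓ hℓ
    rw [hRdef, Finset.mem_range] at hℓ
    have hab : (⟨min ℓ (k-1), by omega⟩ : Fin k) < ⟨min (ℓ+1) (k-1), by omega⟩ := by
      simp only [Fin.mk_lt_mk]; omega
    have hpos : v ⟨min ℓ (k-1), by omega⟩ < v ⟨min (ℓ+1) (k-1), by omega⟩ := hv hab
    have hne : τ ⟨min (ℓ+1) (k-1), by omega⟩ ≠ τ ⟨min ℓ (k-1), by omega⟩ := by
      intro hcon
      have := τ.injective hcon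
      simp only [Fin.mk.injEq] at this
      omega
    have hmem : v ⟨min (ℓ+1) (k-1), by omega⟩ - v ⟨min ℓ (k-1), by omega⟩
        ∈ {d : ℝ | ∃ i j : Fin k, i ≠ j ∧ d = |f (x i) - f (x j)|} := by
      refine ⟨τ ⟨min (ℓ+1) (k-1), by omega⟩, τ ⟨min ℓ (k-1), by omega⟩, hne, ?_⟩
      exact (abs_of_pos (sub_pos.mpr hpos)).symm
    exact hβlb hmem
  -- final estimate
  rw [ge_iff_le, key2]
  have hfinal : ∑ ℓ ∈ R, ∑ m ∈ R, (if ℓ = m then α * β else 0)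
      ≤ ∑ ℓ ∈ R, ∑ m ∈ R, D ℓ * E m * T ℓ m := by
    apply Finset.sum_le_sum
    intro ℓ hℓ
    apply Finset.sum_le_sum
    intro m hm
    by_cases hlm : ℓ = m
    · subst hlm
      rw [if_pos rfl]
      have h1 : α * β ≤ D ℓ * E ℓ :=
        mul_le_mul (hD ℓ hℓ) (hE ℓ hℓ) hβpos.le (le_trans hαpos.le (hD ℓ hℓ))
      have h2 : D ℓ * E ℓ ≤ D ℓ * E ℓ * T ℓ ℓ := by
        nth_rewrite 1 [← mul_one (D ℓ * E ℓ)]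
        apply mul_le_mul_of_nonneg_left (hT1 ℓ hℓ)
        exact le_trans (mul_pos hαpos hβpos).le h1
      linarith
    · simp only [if_neg hlm]
      apply mul_nonneg
      apply mul_nonneg
      · exact le_trans hαpos.le (hD ℓ hℓ)
      · exact le_trans hβpos.le (hE m hm)
      · exact hT0 ℓ m
  refine le_trans ?_ hfinal
  have hdiag : ∀ ℓ ∈ R, ∑ m ∈ R, (if ℓ = m then α * β else 0) = α * β := by
    intro ℓ hℓ
    rw [Finset.sum_ite_eq R ℓ (fun _ => α * β), if_pos hℓ]
  rw [Finset.sum_congr rfl hdiag, Finset.sum_const, hRdef, Finset.card_range,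
    nsmul_eq_mul]
  have : ((k - 1 : ℕ) : ℝ) = (k : ℝ) - 1 := by
    push_cast [Nat.cast_sub hk1]
    ring
  rw [this]
  exact le_of_eq (by ring)
end

section
/- Let x = (x_1,...,x_k) be a vector of distinct real numbers, f strictly increasing, and σ the cyclic permutation i ↦ i+1 (mod k). Suppose there exists an index i such that α_i := min_{j≠i}|x_i − x_j| > 0 and β_i := min_{j≠i}|f(x_i) − f(x_j)| > 0. Then ⟨x, f(x)⟩ − ⟨x, f(σ(x))⟩ ≥ α_i β_i. -/
open MeasureTheory Finset

open Fin.CommRing in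
private lemma cycle_invariant_univ {k : ℕ} [NeZero k] (σ : Equiv.Perm (Fin k))
    (hσ : ∀ i, σ i = i + 1) (S : Finset (Fin k)) (hS : S.image σ = S)
    (j : Fin k) (hj : j ∈ S) : S = Finset.univ := by
  have step : ∀ m : Fin k, m ∈ S → m + 1 ∈ S := by
    intro m hm
    rw [← hS]
    exact Finset.mem_image.2 ⟨m, hm, hσ m⟩
  have hn : ∀ n : ℕ, j + (n : Fin k) ∈ S := by
    intro n
    induction n with
    | zero => simpa using hj
    | succ n ih =>
        have e : ((n + 1 : ℕ) : Fin k) = (n : Fin k) + 1 := by push_cast; ring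
        rw [e, ← add_assoc]
        exact step _ ih
  apply Finset.eq_univ_of_forall
  intro l
  have h2 := hn (l - j).val
  have h3 : j + (l - j) = l := by ring
  rwa [Fin.cast_val_eq_self, h3] at h2

private lemma cyc_key {k : ℕ} (x : Fin k → ℝ) (f : ℝ → ℝ) (σ : Equiv.Perm (Fin k)) (t u v : ℝ)
    (hu : ∀ j, t ≤ x j → u ≤ f (x j)) (hv : ∀ j, x j < t → f (x j) ≤ v) :
    (((Finset.univ.filter fun j => t ≤ x j) \
        ((Finset.univ.filter fun j => t ≤ x j).image σ)).card : ℝ) * (u - v) ≤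
      ∑ j, Set.indicator {s : ℝ | s ≤ x j} (fun _ => f (x j) - f (x (σ j))) t := by
  classical
  set S := Finset.univ.filter fun j => t ≤ x j with hSdef
  set T := S.image σ with hTdef
  have hgt : ∑ j, Set.indicator {s : ℝ | s ≤ x j} (fun _ => f (x j) - f (x (σ j))) t
      = ∑ j ∈ S, (f (x j) - f (x (σ j))) := by
    rw [hSdef, Finset.sum_filter]
    simp [Set.indicator_apply]
  have hcard : S.card = T.card := (Finset.card_image_of_injective S σ.injective).symm
  have hsum_T : ∑ j ∈ T, f (x j) = ∑ j ∈ S, f (x (σ j)) :=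
    Finset.sum_image (fun a _ b _ hab => σ.injective hab)
  have hdiff : ∑ j ∈ S, (f (x j) - f (x (σ j)))
      = ∑ j ∈ S \ T, f (x j) - ∑ j ∈ T \ S, f (x j) := by
    rw [Finset.sum_sdiff_sub_sum_sdiff, hsum_T, Finset.sum_sub_distrib]
  have hcard2 : (T \ S).card = (S \ T).card := Finset.card_sdiff_comm hcard.symm
  have h1 : (S \ T).card • u ≤ ∑ j ∈ S \ T, f (x j) := by
    apply Finset.card_nsmul_le_sum
    intro j hj
    exact hu j (Finset.mem_filter.1 (Finset.mem_sdiff.1 hj).1).2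
  have h2 : ∑ j ∈ T \ S, f (x j) ≤ (T \ S).card • v := by
    apply Finset.sum_le_card_nsmul
    intro j hj
    have hjS : j ∉ S := (Finset.mem_sdiff.1 hj).2
    have : ¬ t ≤ x j := fun hc => hjS (Finset.mem_filter.2 ⟨Finset.mem_univ j, hc⟩)
    exact hv j (not_le.1 this)
  rw [hgt, hdiff]
  rw [hcard2] at h2
  rw [nsmul_eq_mul] at h1 h2
  linarith

private lemma cyc_nonempty_proper {k : ℕ} [NeZero k] (σ : Equiv.Perm (Fin k))
    (hσ : ∀ i, σ i = i + 1) (S : Finset (Fin k)) (hne : S.Nonempty) (hpr : S ≠ Finset.univ) :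
    1 ≤ ((S \ S.image σ).card : ℝ) := by
  by_contra hcon
  have hc0 : (S \ S.image σ).card = 0 := by
    by_contra h0
    have : 1 ≤ (S \ S.image σ).card := Nat.one_le_iff_ne_zero.2 h0
    exact hcon (by exact_mod_cast this)
  have hsub : S ⊆ S.image σ := by
    rw [← Finset.sdiff_eq_empty_iff_subset]
    exact Finset.card_eq_zero.1 hc0
  have hcard : (S.image σ).card = S.card := Finset.card_image_of_injective S σ.injective
  have heq : S.image σ = S := (Finset.eq_of_subset_of_card_le hsub (le_of_eq hcard)).symm
  obtain ⟨j, hj⟩ := hne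
  exact hpr (cycle_invariant_univ σ hσ S heq j hj)

/-- Remark 3: if for a fixed index `i` the entry `x i` is separated from all
other entries (both before and after applying the strictly increasing `f`),
then `⟨x, f(x)⟩ − ⟨x, f(σ(x))⟩ ≥ α_i β_i` for the cyclic permutation `σ`. -/
theorem cycle_inner_product_gap_single (k : ℕ) [NeZero k] (hk : 2 ≤ k)
    (x : Fin k → ℝ) (hx : Function.Injective x)
    (f : ℝ → ℝ) (hf : StrictMono f)
    (σ : Equiv.Perm (Fin k)) (hσ : ∀ i, σ i = i + 1)
    (i : Fin k) (αi βi : ℝ)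
    (hα : IsLeast {d : ℝ | ∃ j : Fin k, j ≠ i ∧ d = |x i - x j|} αi)
    (hβ : IsLeast {d : ℝ | ∃ j : Fin k, j ≠ i ∧ d = |f (x i) - f (x j)|} βi)
    (hαpos : 0 < αi) (hβpos : 0 < βi) :
    (∑ j, x j * f (x j)) - ∑ j, x j * f (x (σ j)) ≥ αi * βi := by
  classical
  have hnei : Nonempty (Fin k) := ⟨i⟩
  -- notation
  set w : Fin k → ℝ := fun j => f (x j) - f (x (σ j)) with hwdef
  set h : Fin k → ℝ → ℝ := fun j => Set.indicator {s : ℝ | s ≤ x j} (fun _ => w j) with hhdef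
  set g : ℝ → ℝ := fun t => ∑ j, h j t with hgdef
  have hw0 : ∑ j, w j = 0 := by
    simp only [hwdef, Finset.sum_sub_distrib]
    rw [Equiv.sum_comp σ (fun j => f (x j))]
    ring
  -- min gap facts
  have hαj : ∀ j, j ≠ i → αi ≤ |x i - x j| := fun j hj => hα.2 ⟨j, hj, rfl⟩
  have hβj : ∀ j, j ≠ i → βi ≤ |f (x i) - f (x j)| := fun j hj => hβ.2 ⟨j, hj, rfl⟩
  have hxup : ∀ j, x i < x j → x i + αi ≤ x j := by
    intro j hlt
    have hj : j ≠ i := fun e => absurd (congrArg x e) (by intro e'; rw [e'] at hlt; exact lt_irrefl _ hlt)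
    have := hαj j hj
    rw [abs_of_neg (by linarith : x i - x j < 0)] at this
    linarith
  have hxdn : ∀ j, x j < x i → x j ≤ x i - αi := by
    intro j hlt
    have hj : j ≠ i := fun e => by rw [e] at hlt; exact lt_irrefl _ hlt
    have := hαj j hj
    rw [abs_of_pos (by linarith : 0 < x i - x j)] at this
    linarith
  have hyup : ∀ j, x i < x j → f (x i) + βi ≤ f (x j) := by
    intro j hlt
    have hj : j ≠ i := fun e => by rw [e] at hlt; exact lt_irrefl _ hlt
    have := hβj j hj
    rw [abs_of_neg (by linarith [hf hlt] : f (x i) - f (x j) < 0)] at this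
    linarith
  have hydn : ∀ j, x j < x i → f (x j) ≤ f (x i) - βi := by
    intro j hlt
    have hj : j ≠ i := fun e => by rw [e] at hlt; exact lt_irrefl _ hlt
    have := hβj j hj
    rw [abs_of_pos (by linarith [hf hlt] : 0 < f (x i) - f (x j))] at this
    linarith
  -- bounds c and M
  set c : ℝ := Finset.univ.inf' Finset.univ_nonempty x with hcdef
  set M : ℝ := Finset.univ.sup' Finset.univ_nonempty x with hMdef
  have hc : ∀ j, c ≤ x j := fun j => Finset.inf'_le x (Finset.mem_univ j)
  have hM : ∀ j, x j ≤ M := fun j => Finset.le_sup' x (Finset.mem_univ j)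
  -- integrability
  have hint : ∀ j (p q : ℝ), IntervalIntegrable (h j) volume p q := by
    intro j p q
    rw [intervalIntegrable_iff]
    apply MeasureTheory.Integrable.indicator
    · exact MeasureTheory.integrableOn_const measure_Ioc_lt_top.ne
    · exact measurableSet_Iic
  have hgint : ∀ p q : ℝ, IntervalIntegrable g volume p q := by
    intro p q
    rw [intervalIntegrable_iff]
    exact MeasureTheory.integrable_finset_sum _ (fun j _ => (intervalIntegrable_iff.1 (hint j p q)))
  -- integral of each piece
  have hint_eq : ∀ j, (∫ t in c..M, h j t) = (x j - c) * w j := by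
    intro j
    rw [hhdef]
    rw [intervalIntegral.integral_indicator ⟨hc j, hM j⟩]
    simp only [intervalIntegral.integral_const, smul_eq_mul, hwdef]
  -- nonnegativity of g
  have hg0 : ∀ t, 0 ≤ g t := by
    intro t
    have := cyc_key x f σ t (f t) (f t) (fun j hj => hf.monotone hj) (fun j hj => (hf hj).le)
    simpa using this
  -- special interval
  have hone : (i + 1 : Fin k) ≠ i := by
    intro e
    have h1 : (1 : Fin k) = 0 := by
      have : i + 1 = i + 0 := by rw [e, add_zero]
      exact add_left_cancel this
    rw [Fin.one_eq_zero_iff] at h1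
    omega
  obtain ⟨a, hca, haM, hgb⟩ : ∃ a : ℝ, c ≤ a ∧ a + αi ≤ M ∧ ∀ t ∈ Set.Ioc a (a + αi), βi ≤ g t := by
    by_cases hmax : ∀ j, x j ≤ x i
    · refine ⟨x i - αi, ?_, ?_, ?_⟩
      · have hlt : x (i+1) < x i := lt_of_le_of_ne (hmax _) (fun e => hone (hx e))
        have := hxdn _ hlt
        linarith [hc (i+1)]
      · linarith [hM i]
      · intro t ht
        have hS1 : i ∈ Finset.univ.filter fun j => t ≤ x j :=
          Finset.mem_filter.2 ⟨Finset.mem_univ i, ht.2.trans (by linarith)⟩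
        have hS2 : (Finset.univ.filter fun j => t ≤ x j) ≠ Finset.univ := by
          intro e
          have : (i+1) ∈ Finset.univ.filter fun j => t ≤ x j := by
            rw [e]; exact Finset.mem_univ _
          have h3 := (Finset.mem_filter.1 this).2
          have hlt : x (i+1) < x i := lt_of_le_of_ne (hmax _) (fun e => hone (hx e))
          have := hxdn _ hlt
          linarith [ht.1]
        have hn := cyc_nonempty_proper σ hσ _ ⟨i, hS1⟩ hS2
        have hkk := cyc_key x f σ t (f (x i)) (f (x i) - βi)
          (fun j hj => by
            rcases eq_or_ne j i with rfl | hne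
            · exact le_rfl
            · exfalso
              have hlt : x j < x i := lt_of_le_of_ne (hmax j) (fun e' => hne (hx e'))
              have := hxdn j hlt
              linarith [ht.1])
          (fun j hj => hydn j (lt_of_lt_of_le hj (ht.2.trans (by linarith))))
        calc βi = 1 * (f (x i) - (f (x i) - βi)) := by ring
        _ ≤ _ * (f (x i) - (f (x i) - βi)) := by
            apply mul_le_mul_of_nonneg_right hn (by linarith)
        _ ≤ g t := hkk
    · push_neg at hmax
      obtain ⟨j₁, hj₁⟩ := hmax
      refine ⟨x i, hc i, ?_, ?_⟩
      · linarith [hM j₁, hxup j₁ hj₁]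
      · intro t ht
        have hS1 : j₁ ∈ Finset.univ.filter fun j => t ≤ x j :=
          Finset.mem_filter.2 ⟨Finset.mem_univ j₁, by linarith [hxup j₁ hj₁, ht.2]⟩
        have hS2 : (Finset.univ.filter fun j => t ≤ x j) ≠ Finset.univ := by
          intro e
          have : i ∈ Finset.univ.filter fun j => t ≤ x j := by
            rw [e]; exact Finset.mem_univ _
          have h3 := (Finset.mem_filter.1 this).2
          linarith [ht.1]
        have hn := cyc_nonempty_proper σ hσ _ ⟨j₁, hS1⟩ hS2
        have hkk := cyc_key x f σ t (f (x i) + βi) (f (x i))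
          (fun j hj => hyup j (lt_of_lt_of_le ht.1 hj))
          (fun j hj => by
            rcases lt_trichotomy (x j) (x i) with hl | he | hg
            · exact (hf hl).le
            · rw [he]
            · exact absurd hj (not_lt.2 (le_trans ht.2 (hxup j hg))))
        calc βi = 1 * ((f (x i) + βi) - f (x i)) := by ring
        _ ≤ _ * ((f (x i) + βi) - f (x i)) := by
            apply mul_le_mul_of_nonneg_right hn (by linarith)
        _ ≤ g t := hkk
  -- now the integral computation
  have hDg : (∫ t in c..M, g t) = (∑ j, x j * f (x j)) - ∑ j, x j * f (x (σ j)) := by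
    have e0 : (∫ t in c..M, g t) = ∑ j, ((x j - c) * w j) := by
      simp only [hgdef]
      rw [intervalIntegral.integral_finset_sum (fun j (_ : j ∈ Finset.univ) => hint j c M)]
      exact Finset.sum_congr rfl (fun j _ => hint_eq j)
    rw [e0]
    have e1 : ∑ j, (x j - c) * w j = ∑ j, x j * w j - c * ∑ j, w j := by
      rw [Finset.mul_sum, ← Finset.sum_sub_distrib]
      exact Finset.sum_congr rfl (fun j _ => by ring)
    rw [e1, hw0, mul_zero, sub_zero]
    simp only [hwdef]
    rw [← Finset.sum_sub_distrib]
    exact Finset.sum_congr rfl (fun j _ => by ring)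
  have hsplit1 := intervalIntegral.integral_add_adjacent_intervals (hgint c a) (hgint a M)
  have hsplit2 := intervalIntegral.integral_add_adjacent_intervals (hgint a (a+αi)) (hgint (a+αi) M)
  have hI1 : 0 ≤ ∫ t in c..a, g t :=
    intervalIntegral.integral_nonneg hca (fun t _ => hg0 t)
  have hI3 : 0 ≤ ∫ t in (a+αi)..M, g t :=
    intervalIntegral.integral_nonneg haM (fun t _ => hg0 t)
  have hI2 : αi * βi ≤ ∫ t in a..(a+αi), g t := by
    have hconst : (∫ _ in a..(a+αi), βi) = αi * βi := by
      rw [intervalIntegral.integral_const]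
      simp [smul_eq_mul]
    rw [← hconst]
    apply intervalIntegral.integral_mono_ae_restrict (by linarith) (intervalIntegrable_const) (hgint a (a+αi))
    rw [Filter.EventuallyLE, MeasureTheory.ae_restrict_iff' measurableSet_Icc]
    have hA : ∀ᵐ t : ℝ ∂volume, t ≠ a := by
      rw [MeasureTheory.ae_iff]
      have : {t : ℝ | ¬ t ≠ a} = {a} := by ext t; simp
      rw [this]
      exact Real.volume_singleton
    filter_upwards [hA] with t ht hti
    exact hgb t ⟨lt_of_le_of_ne hti.1 (Ne.symm ht), hti.2⟩
  rw [ge_iff_le, ← hDg, ← hsplit1, ← hsplit2]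
  linarith
end

section
/- Given nonnegative integers {ε_{k,ℓ}}_{k,ℓ=1}^K with row and column sums u_k = Σ_ℓ ε_{k,ℓ} = Σ_ℓ ε_{ℓ,k}, the number of permutations σ of U (with the block structure above) satisfying ε_{k,ℓ}(σ) = ε_{k,ℓ} for all k, ℓ, counted up to within-block relabeling (i.e., number of distinct induced cross-block assignment patterns), is at most Π_k u_k^{u_k − ε_{k,k}} = exp(Σ_k (u_k − ε_{k,k}) log u_k). -/
open Finset

/-- Bound (bnd2): given target misassignment counts `E_{k,ℓ}` with row and
column sums `u_k`, the number of cross-block assignment patterns `b ∘ σ`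
(i.e., permutations `σ` with `ε_{k,ℓ}(σ) = E_{k,ℓ}` counted up to within-block
relabeling) is at most `∏_k u_k^{u_k − E_{k,k}}`. -/
theorem pattern_count_bound (U : Type*) [Fintype U] [DecidableEq U] (K : ℕ)
    (b : U → Fin K) (E : Fin K → Fin K → ℕ)
    (hrow : ∀ k, ∑ l, E k l = (Finset.univ.filter (fun v => b v = k)).card)
    (hcol : ∀ k, ∑ l, E l k = (Finset.univ.filter (fun v => b v = k)).card) :
    Nat.card {g : U → Fin K // ∃ σ : Equiv.Perm U,
        (∀ k l, (Finset.univ.filter (fun v => b v = k ∧ b (σ v) = l)).card = E k l) ∧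
        g = b ∘ σ}
      ≤ ∏ k, ((Finset.univ.filter (fun v => b v = k)).card)
          ^ ((Finset.univ.filter (fun v => b v = k)).card - E k k) := by
  classical
  letI : LinearOrder U := LinearOrder.lift' (Fintype.equivFin U) (Fintype.equivFin U).injective
  set u : Fin K → ℕ := fun k => (Finset.univ.filter (fun v => b v = k)).card with hu
  -- fiber counts of an admissible pattern g
  have hfib : ∀ (g : U → Fin K), (∃ σ : Equiv.Perm U,
      (∀ k l, (Finset.univ.filter (fun v => b v = k ∧ b (σ v) = l)).card = E k l) ∧ g = b ∘ σ) →
      ∀ k l, (Finset.univ.filter (fun v => b v = k ∧ g v = l)).card = E k l := by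
    rintro g ⟨σ, hσ, rfl⟩ k l
    simpa [Function.comp] using hσ k l
  set A : (U → Fin K) → Fin K → Finset U :=
    fun g k => Finset.univ.filter (fun v => b v = k ∧ g v ≠ k) with hA
  set F : (U → Fin K) → U → Lex (Fin K × U) := fun g v => toLex (g v, v) with hF
  have hFinj : ∀ g, Function.Injective (F g) := by
    intro g v w hvw
    have := congrArg (fun x => (ofLex x).2) hvw
    simpa [hF] using this
  set L : (U → Fin K) → Fin K → List (Lex (Fin K × U)) :=
    fun g k => ((A g k).image (F g)).sort (· ≤ ·) with hL
  have hAcard : ∀ g, (∀ k l, (Finset.univ.filter (fun v => b v = k ∧ g v = l)).card = E k l) →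
      ∀ k, (A g k).card = u k - E k k := by
    intro g hg k
    have hsplit : (Finset.univ.filter (fun v => b v = k ∧ g v = k)).card
        + (Finset.univ.filter (fun v => b v = k ∧ ¬ g v = k)).card
        = (Finset.univ.filter (fun v => b v = k)).card := by
      rw [← Finset.filter_filter, ← Finset.filter_filter]
      exact Finset.card_filter_add_card_filter_not _
    have h1 : (Finset.univ.filter (fun v => b v = k ∧ g v = k)).card = E k k := hg k k
    have h2 : (A g k).card = (Finset.univ.filter (fun v => b v = k ∧ ¬ g v = k)).card := by
      simp [hA]
    have hu' : u k = (Finset.univ.filter (fun v => b v = k)).card := rfl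
    omega
  have hLlen : ∀ g, (∀ k l, (Finset.univ.filter (fun v => b v = k ∧ g v = l)).card = E k l) →
      ∀ k, (L g k).length = u k - E k k := by
    intro g hg k
    rw [hL]
    simp only [Finset.length_sort]
    rw [Finset.card_image_of_injective _ (hFinj g)]
    exact hAcard g hg k
  have hmemL : ∀ g k (x : Lex (Fin K × U)), x ∈ L g k →
      (ofLex x).2 ∈ A g k ∧ g (ofLex x).2 = (ofLex x).1 := by
    intro g k x hx
    rw [hL] at hx
    simp only [Finset.mem_sort] at hx
    obtain ⟨v, hv, rfl⟩ := Finset.mem_image.mp hx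
    exact ⟨hv, rfl⟩
  have hlen : ∀ gp : {g : U → Fin K // ∃ σ : Equiv.Perm U,
      (∀ k l, (Finset.univ.filter (fun v => b v = k ∧ b (σ v) = l)).card = E k l) ∧ g = b ∘ σ},
      ∀ k, (L gp.1 k).length = u k - E k k :=
    fun gp k => hLlen gp.1 (hfib gp.1 gp.2) k
  -- the injection
  refine le_trans (Nat.card_le_card_of_injective
    ((fun gp k i =>
      ⟨(ofLex ((L gp.1 k)[i.1]'(by rw [hlen gp k]; exact i.2))).2,
        (Finset.mem_filter.mp
          (hmemL gp.1 k _ (List.getElem_mem _)).1).2.1⟩) :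
      {g : U → Fin K // ∃ σ : Equiv.Perm U,
        (∀ k l, (Finset.univ.filter (fun v => b v = k ∧ b (σ v) = l)).card = E k l) ∧
        g = b ∘ σ} → ∀ k : Fin K, Fin (u k - E k k) → {v : U // b v = k})
    ?_) ?_
  · -- injectivity
    intro gp gp' heq
    have hg : ∀ k l, (Finset.univ.filter (fun v => b v = k ∧ gp.1 v = l)).card = E k l :=
      hfib gp.1 gp.2
    have hg' : ∀ k l, (Finset.univ.filter (fun v => b v = k ∧ gp'.1 v = l)).card = E k l :=
      hfib gp'.1 gp'.2
    -- multiset of first coordinates of L g k has prescribed counts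
    have hcount : ∀ (g : U → Fin K),
        (∀ k l, (Finset.univ.filter (fun v => b v = k ∧ g v = l)).card = E k l) →
        ∀ k l, Multiset.count l
            (((L g k).map (fun x => (ofLex x).1) : List (Fin K)) : Multiset (Fin K))
          = if l = k then 0 else E k l := by
      intro g hgf k l
      have h1 : ((L g k : List (Lex (Fin K × U))) : Multiset (Lex (Fin K × U)))
          = ((A g k).image (F g)).val := Finset.sort_eq _ _
      have h2 : (((L g k).map (fun x => (ofLex x).1) : List (Fin K)) : Multiset (Fin K))
          = Multiset.map (fun x : Lex (Fin K × U) => (ofLex x).1)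
              ((L g k : List (Lex (Fin K × U))) : Multiset (Lex (Fin K × U))) := by
        simp
      rw [h2, h1, Finset.image_val_of_injOn ((hFinj g).injOn), Multiset.map_map]
      have h3 : ((fun x => (ofLex x).1) ∘ F g) = fun v => g v := by
        funext v; simp [hF]
      rw [h3, Multiset.count_map]
      have h4 : Multiset.filter (fun v => l = g v) (A g k).val
          = ((A g k).filter (fun v => l = g v)).val := rfl
      have h5 : Multiset.card ((A g k).filter (fun v => l = g v)).val
          = ((A g k).filter (fun v => l = g v)).card := rfl
      rw [h4, h5]
      have h6 : (A g k).filter (fun v => l = g v)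
          = Finset.univ.filter (fun v => (b v = k ∧ g v ≠ k) ∧ l = g v) := by
        rw [hA]
        simp only
        rw [Finset.filter_filter]
      rw [h6]
      by_cases hlk : l = k
      · subst hlk
        rw [if_pos rfl, Finset.card_eq_zero, Finset.filter_eq_empty_iff]
        intro v _
        rintro ⟨⟨-, hne⟩, hlv⟩
        exact hne hlv.symm
      · rw [if_neg hlk]
        have hfe : (Finset.univ.filter fun v => (b v = k ∧ g v ≠ k) ∧ l = g v)
            = Finset.univ.filter (fun v => b v = k ∧ g v = l) := by
          apply Finset.filter_congr
          intro v _
          constructor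
          · rintro ⟨⟨hb, -⟩, hl2⟩
            exact ⟨hb, hl2.symm⟩
          · rintro ⟨hb, hl2⟩
            refine ⟨⟨hb, ?_⟩, hl2.symm⟩
            rw [hl2]
            exact hlk
        rw [← hgf k l]
        exact congrArg Finset.card hfe
    -- the sorted lists coincide
    have hlists : ∀ k, L gp.1 k = L gp'.1 k := by
      intro k
      have hlen1 := hlen gp k
      have hlen2 := hlen gp' k
      have hfst : (L gp.1 k).map (fun x => (ofLex x).1)
          = (L gp'.1 k).map (fun x => (ofLex x).1) := by
        refine (fun hp h1 h2 => List.Perm.eq_of_pairwise' (r := (· ≤ ·)) h1 h2 hp) ?_ ?_ ?_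
        · apply Multiset.coe_eq_coe.mp
          apply Multiset.ext.mpr
          intro l
          rw [hcount gp.1 hg k l, hcount gp'.1 hg' k l]
        · refine List.Pairwise.map _ ?_ (Finset.pairwise_sort _ _)
          intro x y hxy
          rcases (Prod.Lex.le_iff (x := x) (y := y)).mp hxy with h | h
          · exact le_of_lt h
          · exact le_of_eq h.1
        · refine List.Pairwise.map _ ?_ (Finset.pairwise_sort _ _)
          intro x y hxy
          rcases (Prod.Lex.le_iff (x := x) (y := y)).mp hxy with h | h
          · exact le_of_lt h
          · exact le_of_eq h.1
      apply List.ext_getElem (by rw [hlen1, hlen2])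
      intro n h1 h2
      have hn : n < u k - E k k := by rw [← hlen1]; exact h1
      have e1 : (ofLex ((L gp.1 k)[n]'h1)).1 = (ofLex ((L gp'.1 k)[n]'h2)).1 := by
        have h1' : n < ((L gp.1 k).map (fun x => (ofLex x).1)).length := by
          simpa using h1
        have h2' : n < ((L gp'.1 k).map (fun x => (ofLex x).1)).length := by
          simpa using h2
        have e : ((L gp.1 k).map (fun x => (ofLex x).1))[n]'h1'
            = ((L gp'.1 k).map (fun x => (ofLex x).1))[n]'h2' := by
          simp only [hfst]
        rwa [List.getElem_map, List.getElem_map] at e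
      have e2 : (ofLex ((L gp.1 k)[n]'h1)).2 = (ofLex ((L gp'.1 k)[n]'h2)).2 := by
        have h3 := congrArg (fun z => z.1) (congrFun (congrFun heq k) ⟨n, hn⟩)
        simpa using h3
      have h7 : ofLex ((L gp.1 k)[n]'h1) = ofLex ((L gp'.1 k)[n]'h2) := Prod.ext e1 e2
      have h8 := congrArg toLex h7
      simpa using h8
    -- hence the image finsets coincide
    have himg : ∀ k, (A gp.1 k).image (F gp.1) = (A gp'.1 k).image (F gp'.1) := by
      intro k
      apply Finset.val_injective
      have e1 : ((A gp.1 k).image (F gp.1)).val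
          = ((L gp.1 k : List (Lex (Fin K × U))) : Multiset (Lex (Fin K × U))) :=
        (Finset.sort_eq _ _).symm
      have e2 : ((A gp'.1 k).image (F gp'.1)).val
          = ((L gp'.1 k : List (Lex (Fin K × U))) : Multiset (Lex (Fin K × U))) :=
        (Finset.sort_eq _ _).symm
      rw [e1, e2, hlists k]
    -- conclude g = g'
    have hstep : ∀ (g g' : U → Fin K),
        (∀ k, (A g k).image (F g) = (A g' k).image (F g')) →
        ∀ v, g v ≠ b v → g' v = g v := by
      intro g g' him v hv
      have hvA : v ∈ A g (b v) :=
        Finset.mem_filter.mpr ⟨Finset.mem_univ v, rfl, hv⟩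
      have hm : F g v ∈ (A g' (b v)).image (F g') := by
        rw [← him (b v)]
        exact Finset.mem_image_of_mem _ hvA
      obtain ⟨w, hw, hwv⟩ := Finset.mem_image.mp hm
      have hw2 : w = v := congrArg (fun x => (ofLex x).2) hwv
      have hw1 : g' w = g v := congrArg (fun x => (ofLex x).1) hwv
      rw [hw2] at hw1
      exact hw1
    have himg' : ∀ k, (A gp'.1 k).image (F gp'.1) = (A gp.1 k).image (F gp.1) :=
      fun k => (himg k).symm
    have hgg : gp.1 = gp'.1 := by
      funext v
      by_cases h1 : gp.1 v = b v
      · by_cases h2 : gp'.1 v = b v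
        · rw [h1, h2]
        · exact hstep gp'.1 gp.1 himg' v h2
      · exact (hstep gp.1 gp'.1 himg v h1).symm
    exact Subtype.ext hgg
  · -- cardinality of the codomain
    apply le_of_eq
    rw [Nat.card_eq_fintype_card]
    rw [Fintype.card_pi]
    apply Finset.prod_congr rfl
    intro k _
    rw [Fintype.card_fun, Fintype.card_fin, Fintype.card_subtype]
end
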